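/- Let q ≥ 2 and 0 ≤ r < q be integers. Let p_{n,r} = A_{S,n,r}/A_{S,n} be the probability that a uniformly random composition of n with parts in S has multiplicity of m congruent to r mod q. Then lim_{n→∞} p_{n,r} = 1/q. -/

import Mathlib

open Finset

def comps (S : Finset ℕ) (n : ℕ) : Finset (List ℕ) :=
  ((Finset.univ : Finset (Composition n)).image Composition.blocks).filter
    (fun l => ∀ p ∈ l, p ∈ S)

lemma mem_comps {S : Finset ℕ} (hS : ∀ p ∈ S, 0 < p) {n : ℕ} {l : List ℕ} :
    l ∈ comps S n ↔ l.sum = n ∧ ∀ p ∈ l, p ∈ S := by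
  simp only [comps, Finset.mem_filter, Finset.mem_image, Finset.mem_univ, true_and]
  constructor
  · rintro ⟨⟨c, rfl⟩, h2⟩
    exact ⟨c.blocks_sum, h2⟩
  · rintro ⟨h1, h2⟩
    exact ⟨⟨⟨l, @fun p hp => hS p (h2 p hp), h1⟩, rfl⟩, h2⟩

def pre (S : Finset ℕ) (N j : ℕ) : Finset (List ℕ) :=
  (comps S j).filter (fun u => u ≠ [] ∧ u.dropLast.sum < N)

lemma sum_take_le (l : List ℕ) (t : ℕ) : (l.take t).sum ≤ l.sum := by
  conv_rhs => rw [← List.take_append_drop t l]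
  rw [List.sum_append]
  omega

lemma crossing_unique {N : ℕ} {u u' v v' : List ℕ}
    (h : N ≤ u.sum) (h' : N ≤ u'.sum)
    (hd : u.dropLast.sum < N) (hd' : u'.dropLast.sum < N)
    (happ : u ++ v = u' ++ v') : u = u' ∧ v = v' := by
  have key : ∀ w w' x x' : List ℕ, w.length ≤ w'.length → N ≤ w.sum →
      w'.dropLast.sum < N → w ++ x = w' ++ x' → w.length = w'.length := by
    intro w w' x x' hlen hw hw' he
    by_contra hne
    have hlt : w.length ≤ w'.length - 1 := by omega
    have hpre : w = w'.take w.length := by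
      have : (w ++ x).take w.length = (w' ++ x').take w.length := by rw [he]
      rwa [List.take_left, List.take_append_of_le_length hlen] at this
    have : w = w'.dropLast.take w.length := by
      rw [List.dropLast_eq_take, List.take_take, min_eq_left hlt]
      exact hpre
    have hle : w.sum ≤ w'.dropLast.sum := by
      rw [this]; exact sum_take_le _ _
    omega
  have h1 : u.length ≤ u'.length ∨ u'.length ≤ u.length := le_total _ _
  have hlen : u.length = u'.length := by
    rcases h1 with h1 | h1
    · exact key u u' v v' h1 h hd' happ
    · exact (key u' u v' v h1 h' hd happ.symm).symm
  obtain ⟨h2, h3⟩ := List.append_inj happ hlen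
  exact ⟨h2, h3⟩

lemma exists_crossing {S : Finset ℕ} (hS : ∀ p ∈ S, 0 < p) {m : ℕ}
    (hmax : ∀ p ∈ S, p ≤ m) {n N : ℕ} (hN : 1 ≤ N) (hn : N ≤ n) {l : List ℕ}
    (hl : l ∈ comps S n) : ∃ j ∈ Finset.Ico N (N + m), ∃ u ∈ pre S N j,
      ∃ v ∈ comps S (n - j), l = u ++ v ∧ u.sum = j := by
  rw [mem_comps hS] at hl
  obtain ⟨hsum, hparts⟩ := hl
  have hex : ∃ t, N ≤ (l.take t).sum := ⟨l.length, by rw [List.take_length, hsum]; exact hn⟩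
  classical
  set t := Nat.find hex with ht
  have hspec : N ≤ (l.take t).sum := Nat.find_spec hex
  have ht1 : 1 ≤ t := by
    rcases Nat.eq_zero_or_pos t with h0 | h0
    · exfalso; rw [h0] at hspec; simp at hspec; omega
    · exact h0
  have htlen : t ≤ l.length := by
    have := Nat.find_min' hex (m := l.length) (by rw [List.take_length, hsum]; exact hn)
    exact this
  have hmin : (l.take (t - 1)).sum < N := by
    have := Nat.find_min hex (m := t - 1) (by omega)
    omega
  set u := l.take t with hu
  set v := l.drop t with hv
  have hulen : u.length = t := by rw [hu, List.length_take]; omega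
  have hdrop : u.dropLast = l.take (t - 1) := by
    rw [hu, List.dropLast_eq_take, List.take_take, List.length_take]
    congr 1
    omega
  have husum : u.sum < N + m := by
    have hgt : t - 1 < l.length := by omega
    have h2 : u.sum = (l.take (t-1)).sum + l.get ⟨t - 1, hgt⟩ := by
      have h3 := List.sum_take_succ l (t - 1) hgt
      have h4 : t - 1 + 1 = t := by omega
      rw [h4] at h3
      rw [hu, h3]
      rfl
    have hgm : l.get ⟨t - 1, hgt⟩ ≤ m := hmax _ (hparts _ (List.get_mem l _))
    omega
  refine ⟨u.sum, ?_, u, ?_, v, ?_, ?_, rfl⟩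
  · rw [Finset.mem_Ico]; exact ⟨hspec, husum⟩
  · rw [pre, Finset.mem_filter, mem_comps hS]
    refine ⟨⟨rfl, fun p hp => hparts p (List.mem_of_mem_take hp)⟩, ?_, ?_⟩
    · intro h0
      rw [h0] at hulen; simp at hulen; omega
    · rw [hdrop]; exact hmin
  · rw [mem_comps hS]
    have : u.sum + v.sum = n := by rw [hu, hv, ← List.sum_append, List.take_append_drop, hsum]
    constructor
    · omega
    · exact fun p hp => hparts p (List.mem_of_mem_drop hp)
  · rw [hu, hv, List.take_append_drop]

lemma mem_pre {S : Finset ℕ} (hS : ∀ p ∈ S, 0 < p) {N j : ℕ} {u : List ℕ} :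
    u ∈ pre S N j ↔ u.sum = j ∧ (∀ p ∈ u, p ∈ S) ∧ u ≠ [] ∧ u.dropLast.sum < N := by
  rw [pre, Finset.mem_filter, mem_comps hS]
  tauto

lemma comps_eq_biUnion {S : Finset ℕ} (hS : ∀ p ∈ S, 0 < p) {m : ℕ}
    (hmax : ∀ p ∈ S, p ≤ m) (hm0 : 0 < m) {N n : ℕ} (hN : 1 ≤ N) (hn : N + m ≤ n + 1) :
    comps S n = (Finset.Ico N (N + m)).biUnion
      (fun j => ((pre S N j) ×ˢ (comps S (n - j))).image (fun p => p.1 ++ p.2)) := by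
  apply Finset.ext
  intro l
  constructor
  · intro hl
    obtain ⟨j, hj, u, hu, v, hv, hluv, _⟩ :=
      exists_crossing hS hmax hN (by omega) hl
    rw [Finset.mem_biUnion]
    exact ⟨j, hj, Finset.mem_image.mpr ⟨(u, v), Finset.mem_product.mpr ⟨hu, hv⟩, hluv.symm⟩⟩
  · intro hl
    rw [Finset.mem_biUnion] at hl
    obtain ⟨j, hj, hl⟩ := hl
    rw [Finset.mem_image] at hl
    obtain ⟨⟨u, v⟩, huv, rfl⟩ := hl
    rw [Finset.mem_product] at huv
    obtain ⟨hu, hv⟩ := huv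
    rw [mem_pre hS] at hu
    rw [mem_comps hS] at hv
    rw [Finset.mem_Ico] at hj
    rw [mem_comps hS]
    constructor
    · rw [List.sum_append, hu.1, hv.1]; omega
    · intro p hp
      rcases List.mem_append.mp hp with h | h
      · exact hu.2.1 p h
      · exact hv.2 p h

theorem decomp {R : Type*} [CommSemiring R] {S : Finset ℕ} (hS : ∀ p ∈ S, 0 < p) {m : ℕ}
    (hmax : ∀ p ∈ S, p ≤ m) (hm0 : 0 < m) {N n : ℕ} (hN : 1 ≤ N) (hn : N + m ≤ n + 1)
    (f : List ℕ → R) (hf : ∀ u v, f (u ++ v) = f u * f v) :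
    ∑ l ∈ comps S n, f l =
      ∑ j ∈ Finset.Ico N (N + m), (∑ u ∈ pre S N j, f u) * (∑ v ∈ comps S (n - j), f v) := by
  rw [comps_eq_biUnion hS hmax hm0 hN hn]
  rw [Finset.sum_biUnion]
  · apply Finset.sum_congr rfl
    intro j hj
    rw [Finset.mem_Ico] at hj
    rw [Finset.sum_image]
    · rw [Finset.sum_product, Finset.sum_mul_sum]
      exact Finset.sum_congr rfl fun u _ => Finset.sum_congr rfl fun v _ => hf u v
    · rintro ⟨u, v⟩ huv ⟨u', v'⟩ huv' he
      rw [Finset.mem_coe, Finset.mem_product, mem_pre hS] at huv huv'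
      have h1 := crossing_unique (u := u) (u' := u') (v := v) (v' := v')
        (by rw [huv.1.1]; exact hj.1) (by rw [huv'.1.1]; exact hj.1)
        huv.1.2.2.2 huv'.1.2.2.2 he
      rw [Prod.mk.injEq]
      exact h1
  · intro j hj j' hj' hjj'
    rw [Finset.mem_coe, Finset.mem_Ico] at hj hj'
    apply Finset.disjoint_left.mpr
    rintro l hl hl'
    rw [Finset.mem_image] at hl hl'
    obtain ⟨⟨u, v⟩, huv, he⟩ := hl
    obtain ⟨⟨u', v'⟩, huv', he'⟩ := hl'
    rw [Finset.mem_product, mem_pre hS] at huv huv'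
    have he2 : u ++ v = u' ++ v' := by rw [he, he']
    have h1 := crossing_unique (u := u) (u' := u') (v := v) (v' := v')
      (by rw [huv.1.1]; exact hj.1) (by rw [huv'.1.1]; exact hj'.1)
      huv.1.2.2.2 huv'.1.2.2.2 he2
    apply hjj'
    rw [← huv.1.1, ← huv'.1.1, h1.1]

def NRep (T : Finset ℕ) (n : ℕ) : Prop := ∃ l : List ℕ, (∀ p ∈ l, p ∈ T) ∧ l.sum = n

lemma nrep_zero (T : Finset ℕ) : NRep T 0 := ⟨[], by simp, rfl⟩

lemma nrep_mem {T : Finset ℕ} {a : ℕ} (ha : a ∈ T) : NRep T a := ⟨[a], by simp [ha], by simp⟩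

lemma nrep_add {T : Finset ℕ} {x y : ℕ} (hx : NRep T x) (hy : NRep T y) : NRep T (x + y) := by
  obtain ⟨l1, h1, h1s⟩ := hx
  obtain ⟨l2, h2, h2s⟩ := hy
  exact ⟨l1 ++ l2, by
    intro p hp
    rcases List.mem_append.mp hp with h | h
    exacts [h1 p h, h2 p h], by rw [List.sum_append, h1s, h2s]⟩

lemma nrep_mul {T : Finset ℕ} {x : ℕ} (c : ℕ) (hx : NRep T x) : NRep T (c * x) := by
  induction c with
  | zero => simpa using nrep_zero T
  | succ c ih =>
    have := nrep_add ih hx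
    rwa [Nat.succ_mul]

lemma nrep_mono {T T' : Finset ℕ} (h : T ⊆ T') {x : ℕ} (hx : NRep T x) : NRep T' x := by
  obtain ⟨l, h1, h2⟩ := hx
  exact ⟨l, fun p hp => h (h1 p hp), h2⟩

lemma nrep_gcd_step (T : Finset ℕ) : ∃ x, NRep T x ∧ NRep T (x + T.gcd id) := by
  classical
  induction T using Finset.induction_on with
  | empty => exact ⟨0, nrep_zero _, by simpa [Finset.gcd_empty] using nrep_zero (∅ : Finset ℕ)⟩
  | @insert a T ha ih =>
    obtain ⟨x, hx, hxg⟩ := ih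
    set g := T.gcd id with hg
    have hgi : (insert a T).gcd id = Nat.gcd a g := by
      rw [Finset.gcd_insert]; rfl
    set A := Nat.gcdA a g with hA
    set B := Nat.gcdB a g with hB
    have hbez : (Nat.gcd a g : ℤ) = a * A + g * B := Nat.gcd_eq_gcd_ab a g
    set Ap := A.toNat with hAp
    set Am := (-A).toNat with hAm
    set Bp := B.toNat with hBp
    set Bm := (-B).toNat with hBm
    have hAe : (Ap : ℤ) - Am = A := by
      rw [hAp, hAm]; omega
    have hBe : (Bp : ℤ) - Bm = B := by
      rw [hBp, hBm]; omega
    set t := B.natAbs with ht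
    have hBpt : Bp ≤ t := by rw [hBp, ht]; omega
    have hBmt : Bm ≤ t := by rw [hBm, ht]; omega
    have hxT : NRep (insert a T) x := nrep_mono (Finset.subset_insert a T) hx
    have hxgT : NRep (insert a T) (x + g) := nrep_mono (Finset.subset_insert a T) hxg
    refine ⟨Am * a + ((t - Bm) * x + Bm * (x + g)), ?_, ?_⟩
    · exact nrep_add (nrep_mul Am (nrep_mem (Finset.mem_insert_self a T)))
        (nrep_add (nrep_mul (t - Bm) hxT) (nrep_mul Bm hxgT))
    · have key : Am * a + ((t - Bm) * x + Bm * (x + g)) + (insert a T).gcd id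
          = Ap * a + ((t - Bp) * x + Bp * (x + g)) := by
      -- cast to ℤ
        have hcast : (Am : ℤ) * a + ((t - Bm : ℕ) * x + Bm * (x + g)) + Nat.gcd a g
            = Ap * a + ((t - Bp : ℕ) * x + Bp * (x + g)) := by
          push_cast [Nat.cast_sub hBmt, Nat.cast_sub hBpt]
          linear_combination hbez + (a : ℤ) * hAe.symm + (g : ℤ) * hBe.symm
        rw [hgi]
        exact_mod_cast hcast
      rw [key]
      exact nrep_add (nrep_mul Ap (nrep_mem (Finset.mem_insert_self a T)))
        (nrep_add (nrep_mul (t - Bp) hxT) (nrep_mul Bp hxgT))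

lemma nrep_large {T : Finset ℕ} (hg : T.gcd id = 1) : ∃ N0, ∀ n, N0 ≤ n → NRep T n := by
  obtain ⟨x, hx, hx1⟩ := nrep_gcd_step T
  rw [hg] at hx1
  rcases Nat.eq_zero_or_pos x with h0 | h0
  · subst h0
    refine ⟨0, fun n _ => ?_⟩
    have := nrep_mul n hx1
    simpa using this
  · refine ⟨x * x, fun n hn => ?_⟩
    set qq := n / x with hq
    set rr := n % x with hr
    have hdm : qq * x + rr = n := by rw [hq, hr]; exact Nat.div_add_mod' n x
    have hrx : rr < x := Nat.mod_lt n h0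
    have hrq : rr ≤ qq := by
      have : x ≤ qq := by
        rw [hq]
        exact Nat.le_div_iff_mul_le h0 |>.mpr (by nlinarith)
      omega
    have heq : (qq - rr) * x + rr * (x + 1) = n := by
      have h1 : (qq - rr) * x = qq * x - rr * x := Nat.sub_mul qq rr x
      have h2 : rr * x ≤ qq * x := Nat.mul_le_mul_right x hrq
      have h3 : rr * (x + 1) = rr * x + rr := by ring
      omega
    rw [← heq]
    exact nrep_add (nrep_mul _ hx) (nrep_mul _ hx1)

lemma unit_add_lt {a b : ℂ} (ha : ‖a‖ = 1) (hb : ‖b‖ = 1)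
    (hne : a ≠ b) : ‖a + b‖ < 2 := by
  have hre : (a * (starRingEnd ℂ) b).re < 1 := by
    rcases lt_or_eq_of_le (Complex.re_le_norm (a * (starRingEnd ℂ) b)) with h | h
    · calc (a * (starRingEnd ℂ) b).re < ‖a * (starRingEnd ℂ) b‖ := h
        _ = 1 := by rw [norm_mul, ha, Complex.norm_conj, hb]; ring
    · exfalso
      have habs : ‖a * (starRingEnd ℂ) b‖ = 1 := by
        rw [norm_mul, ha, Complex.norm_conj, hb]; ring
      have hre1 : (a * (starRingEnd ℂ) b).re = 1 := h.trans habs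
      have hnsq : Complex.normSq (a * (starRingEnd ℂ) b) = 1 := by
        have := Complex.sq_norm (a * (starRingEnd ℂ) b)
        rw [habs] at this; simpa using this.symm
      have him : (a * (starRingEnd ℂ) b).im = 0 := by
        have := Complex.normSq_apply (a * (starRingEnd ℂ) b)
        rw [hnsq, hre1] at this
        nlinarith
      have hz1 : a * (starRingEnd ℂ) b = 1 := by
        apply Complex.ext <;> simp [hre1, him]
      have hbb : b * (starRingEnd ℂ) b = 1 := by
        rw [Complex.mul_conj]
        rw [← Complex.sq_norm, hb]; norm_num
      have hbb2 : (starRingEnd ℂ) b * b = 1 := by rw [mul_comm]; exact hbb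
      apply hne
      calc a = a * ((starRingEnd ℂ) b * b) := by rw [hbb2, mul_one]
        _ = (a * (starRingEnd ℂ) b) * b := by ring
        _ = b := by rw [hz1, one_mul]
  have h4 : Complex.normSq (a + b) < 4 := by
    rw [Complex.normSq_add]
    have h1 : Complex.normSq a = 1 := by rw [← Complex.sq_norm, ha]; norm_num
    have h2 : Complex.normSq b = 1 := by rw [← Complex.sq_norm, hb]; norm_num
    rw [h1, h2]
    linarith
  rw [Complex.norm_def]
  rw [show (2:ℝ) = Real.sqrt 4 by
    rw [show (4:ℝ) = 2^2 by norm_num, Real.sqrt_sq]; norm_num]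
  exact Real.sqrt_lt_sqrt (Complex.normSq_nonneg _) h4

lemma unit_sum_lt {α : Type*} [DecidableEq α] {T : Finset α} {f : α → ℂ}
    (hf : ∀ x ∈ T, ‖f x‖ = 1) {x y : α} (hx : x ∈ T) (hy : y ∈ T)
    (hne : f x ≠ f y) : ‖∑ z ∈ T, f z‖ < T.card := by
  have hxy : x ≠ y := fun h => hne (by rw [h])
  have hyT : y ∈ T.erase x := Finset.mem_erase.mpr ⟨fun h => hxy h.symm, hy⟩
  have hsplit : ∑ z ∈ T, f z = f x + (f y + ∑ z ∈ (T.erase x).erase y, f z) := by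
    rw [Finset.add_sum_erase _ _ hyT, Finset.add_sum_erase _ _ hx]
  have hcard : T.card = ((T.erase x).erase y).card + 2 := by
    rw [Finset.card_erase_of_mem hyT, Finset.card_erase_of_mem hx]
    have h1 : 1 ≤ T.card := Finset.card_pos.mpr ⟨x, hx⟩
    have h2 : 2 ≤ T.card := Finset.one_lt_card.mpr ⟨x, hx, y, hy, hxy⟩
    omega
  have hrest : ‖∑ z ∈ (T.erase x).erase y, f z‖ ≤ ((T.erase x).erase y).card := by
    calc ‖∑ z ∈ (T.erase x).erase y, f z‖
        ≤ ∑ z ∈ (T.erase x).erase y, ‖f z‖ := norm_sum_le _ _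
      _ = ∑ z ∈ (T.erase x).erase y, 1 := by
          apply Finset.sum_congr rfl
          intro z hz
          exact hf z (Finset.mem_of_mem_erase (Finset.mem_of_mem_erase hz))
      _ = ((T.erase x).erase y).card := by simp
  have hab : ‖f x + f y‖ < 2 :=
    unit_add_lt (hf x hx) (hf y hy) hne
  calc ‖∑ z ∈ T, f z‖
      = ‖(f x + f y) + ∑ z ∈ (T.erase x).erase y, f z‖ := by rw [hsplit]; ring_nf
    _ ≤ ‖f x + f y‖ + ‖∑ z ∈ (T.erase x).erase y, f z‖ :=
        norm_add_le _ _
    _ < 2 + ((T.erase x).erase y).card := by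
        apply add_lt_add_of_lt_of_le hab hrest
    _ = (T.card : ℝ) := by rw [hcard]; push_cast; ring

noncomputable def cplx (S : Finset ℕ) (m : ℕ) (ω : ℂ) (n : ℕ) : ℂ :=
  ∑ l ∈ comps S n, ω ^ (l.count m)

noncomputable def Ec (S : Finset ℕ) (m N : ℕ) (ω : ℂ) (j : ℕ) : ℂ :=
  ∑ u ∈ pre S N j, ω ^ (u.count m)

section Assembly

variable {S : Finset ℕ} {m : ℕ} (hSpos : ∀ p ∈ S, 0 < p) (hmS : m ∈ S)
  (hmax : ∀ p ∈ S, p ≤ m)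
  {T : Finset ℕ} (hTS : T ⊆ S) (hTm : ∀ t ∈ T, t < m)
  {N0 : ℕ} (hN0 : ∀ n, N0 ≤ n → NRep T n)

include hSpos hmS hmax hTS hTm hN0

lemma pre_pair {j : ℕ} (hj : j ∈ Finset.Ico (N0 + 2 * m) (N0 + 2 * m + m)) :
    ∃ u0 ∈ pre S (N0 + 2 * m) j, ∃ u1 ∈ pre S (N0 + 2 * m) j,
      u0.count m = 1 ∧ u1.count m = 2 := by
  have hm0 : 0 < m := hSpos m hmS
  rw [Finset.mem_Ico] at hj
  set N := N0 + 2 * m with hN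
  obtain ⟨w0, hw0T, hw0s⟩ := hN0 (j - m) (by omega)
  obtain ⟨w0', hw0T', hw0s'⟩ := hN0 (j - m - m) (by omega)
  have hmem0 : ∀ p ∈ w0, p ∈ S := fun p hp => hTS (hw0T p hp)
  have hmem0' : ∀ p ∈ w0', p ∈ S := fun p hp => hTS (hw0T' p hp)
  have hnot0 : m ∉ w0 := fun h => absurd (hTm m (hw0T m h)) (lt_irrefl m)
  have hnot0' : m ∉ w0' := fun h => absurd (hTm m (hw0T' m h)) (lt_irrefl m)
  refine ⟨w0 ++ [m], ?_, (m :: w0') ++ [m], ?_, ?_, ?_⟩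
  · rw [mem_pre hSpos]
    refine ⟨?_, ?_, by simp, ?_⟩
    · rw [List.sum_append, hw0s]; simp; omega
    · intro p hp
      rcases List.mem_append.mp hp with h | h
      · exact hmem0 p h
      · simp at h; subst h; exact hmS
    · rw [List.dropLast_concat, hw0s]; omega
  · rw [mem_pre hSpos]
    refine ⟨?_, ?_, by simp, ?_⟩
    · rw [List.sum_append, List.sum_cons, hw0s']; simp; omega
    · intro p hp
      rcases List.mem_append.mp hp with h | h
      · rcases List.mem_cons.mp h with h | h
        · subst h; exact hmS
        · exact hmem0' p h
      · simp at h; subst h; exact hmS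
    · have he : (m :: w0' ++ [m]) = (m :: w0') ++ [m] := by simp
      rw [he, List.dropLast_concat, List.sum_cons, hw0s']
      omega
  · rw [List.count_append, List.count_eq_zero.mpr hnot0]
    simp
  · rw [List.count_append, List.count_cons_self, List.count_eq_zero.mpr hnot0']
    simp

set_option maxHeartbeats 1000000 in
lemma theta_exists (ω : ℂ) (hω : ‖ω‖ = 1) (hω1 : ω ≠ 1) :
    ∃ θ : ℝ, 0 ≤ θ ∧ θ < 1 ∧ ∀ t n : ℕ, (N0 + 2 * m + m) * t ≤ n →
      ‖cplx S m ω n‖ ≤ θ ^ t * ((comps S n).card : ℝ) := by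
  classical
  have hm0 : 0 < m := hSpos m hmS
  set N := N0 + 2 * m with hN
  have hωn0 : ω ≠ 0 := by
    intro h; rw [h] at hω; simp at hω
  -- strict bound for each j in the window
  have hstrict : ∀ j ∈ Finset.Ico N (N + m),
      ‖Ec S m N ω j‖ < ((pre S N j).card : ℝ) ∧ 0 < (pre S N j).card := by
    intro j hj
    obtain ⟨u0, hu0, u1, hu1, hc0, hc1⟩ := pre_pair hSpos hmS hmax hTS hTm hN0 hj
    have hne : ω ^ (u0.count m) ≠ ω ^ (u1.count m) := by
      rw [hc0, hc1]
      intro h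
      apply hω1
      have : ω * 1 = ω * ω := by rw [mul_one]; rw [pow_one, pow_two] at h; exact h
      exact (mul_left_cancel₀ hωn0 this).symm
    refine ⟨?_, Finset.card_pos.mpr ⟨u0, hu0⟩⟩
    exact unit_sum_lt (fun x _ => by rw [norm_pow, hω, one_pow]) hu0 hu1 hne
  -- define θ as the max of the ratios
  have hne : (Finset.Ico N (N + m)).Nonempty := by
    rw [Finset.nonempty_Ico]; omega
  set θ := (Finset.Ico N (N + m)).sup' hne
    (fun j => ‖Ec S m N ω j‖ / ((pre S N j).card : ℝ)) with hθ
  have hθ0 : 0 ≤ θ := by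
    obtain ⟨j, hj⟩ := hne
    refine le_trans ?_ (Finset.le_sup' _ hj)
    positivity
  have hθ1 : θ < 1 := by
    rw [hθ, Finset.sup'_lt_iff]
    intro j hj
    obtain ⟨h1, h2⟩ := hstrict j hj
    rw [div_lt_one (by exact_mod_cast h2)]
    exact h1
  have hEb : ∀ j ∈ Finset.Ico N (N + m),
      ‖Ec S m N ω j‖ ≤ θ * ((pre S N j).card : ℝ) := by
    intro j hj
    obtain ⟨h1, h2⟩ := hstrict j hj
    have hpos : (0:ℝ) < ((pre S N j).card : ℝ) := by exact_mod_cast h2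
    have := Finset.le_sup' (f := fun j => ‖Ec S m N ω j‖ / ((pre S N j).card : ℝ)) hj
    rw [← hθ] at this
    calc ‖Ec S m N ω j‖
        = (‖Ec S m N ω j‖ / ((pre S N j).card : ℝ)) * ((pre S N j).card : ℝ) := by
          field_simp
      _ ≤ θ * ((pre S N j).card : ℝ) := by
          apply mul_le_mul_of_nonneg_right this (le_of_lt hpos)
  refine ⟨θ, hθ0, hθ1, ?_⟩
  intro t
  induction t with
  | zero =>
    intro n _
    rw [pow_zero, one_mul, cplx]
    calc ‖∑ l ∈ comps S n, ω ^ l.count m‖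
        ≤ ∑ l ∈ comps S n, ‖ω ^ l.count m‖ := norm_sum_le _ _
      _ = ∑ l ∈ comps S n, 1 := by
          apply Finset.sum_congr rfl; intro l _; rw [norm_pow, hω, one_pow]
      _ = ((comps S n).card : ℝ) := by simp
  | succ t ih =>
    intro n hn
    have hm1 : 1 ≤ N := by omega
    have hnm : N + m ≤ n + 1 := by
      have : (N + m) * (t + 1) ≥ N + m := Nat.le_mul_of_pos_right _ (by omega)
      omega
    have hdec : cplx S m ω n = ∑ j ∈ Finset.Ico N (N + m),
        (Ec S m N ω j) * (cplx S m ω (n - j)) := by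
      rw [cplx]
      rw [decomp hSpos hmax hm0 hm1 hnm (fun l => ω ^ l.count m)
        (fun u v => by simp only [List.count_append, pow_add])]
      rfl
    have haid : ((comps S n).card : ℝ) = ∑ j ∈ Finset.Ico N (N + m),
        ((pre S N j).card : ℝ) * ((comps S (n - j)).card : ℝ) := by
      have := decomp (R := ℝ) hSpos hmax hm0 hm1 hnm (fun _ => (1:ℝ))
        (fun u v => by rw [mul_one])
      simpa using this
    rw [hdec]
    calc ‖∑ j ∈ Finset.Ico N (N + m), Ec S m N ω j * cplx S m ω (n - j)‖
        ≤ ∑ j ∈ Finset.Ico N (N + m), ‖Ec S m N ω j * cplx S m ω (n - j)‖ :=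
          norm_sum_le _ _
      _ ≤ ∑ j ∈ Finset.Ico N (N + m),
            (θ * ((pre S N j).card : ℝ)) * (θ ^ t * ((comps S (n - j)).card : ℝ)) := by
          apply Finset.sum_le_sum
          intro j hj
          rw [norm_mul]
          apply mul_le_mul (hEb j hj) ?_ (norm_nonneg _) ?_
          · apply ih
            rw [Finset.mem_Ico] at hj
            have := hj.2
            have h2 : (N + m) * (t + 1) = (N + m) * t + (N + m) := by ring
            omega
          · positivity
      _ = θ ^ (t + 1) * ∑ j ∈ Finset.Ico N (N + m),
            ((pre S N j).card : ℝ) * ((comps S (n - j)).card : ℝ) := by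
          rw [Finset.mul_sum]
          apply Finset.sum_congr rfl
          intro j _
          ring
      _ = θ ^ (t + 1) * ((comps S n).card : ℝ) := by rw [← haid]

end Assembly

lemma char_sum {q r : ℕ} (hq : 0 < q) (hr : r < q) {ζ : ℂ} (hprim : IsPrimitiveRoot ζ q)
    (x : ℕ) :
    ∑ d ∈ Finset.range q, ((ζ ^ x) * ((ζ ^ r)⁻¹)) ^ d = if x % q = r then (q : ℂ) else 0 := by
  have hζ0 : ζ ≠ 0 := by
    intro h
    have := hprim.pow_eq_one
    rw [h, zero_pow (by omega)] at this
    exact zero_ne_one this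
  have hζq : ζ ^ q = 1 := hprim.pow_eq_one
  have hxmod : ζ ^ x = ζ ^ (x % q) := by
    conv_lhs => rw [← Nat.div_add_mod x q]
    rw [pow_add, pow_mul, hζq, one_pow, one_mul]
  have hwq : ((ζ ^ x) * (ζ ^ r)⁻¹) ^ q = 1 := by
    rw [mul_pow, ← pow_mul, mul_comm x q, pow_mul, hζq, one_pow, one_mul,
      inv_pow, ← pow_mul, mul_comm r q, pow_mul, hζq, one_pow, inv_one]
  by_cases hcase : x % q = r
  · rw [if_pos hcase]
    have hw1 : (ζ ^ x) * (ζ ^ r)⁻¹ = 1 := by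
      rw [hxmod, hcase, mul_inv_cancel₀ (pow_ne_zero _ hζ0)]
    rw [hw1]
    simp
  · rw [if_neg hcase]
    have hw1 : (ζ ^ x) * (ζ ^ r)⁻¹ ≠ 1 := by
      intro h
      apply hcase
      have : ζ ^ x = ζ ^ r := by
        have := congrArg (· * ζ ^ r) h
        simpa [mul_assoc, inv_mul_cancel₀ (pow_ne_zero r hζ0)] using this
      rw [hxmod] at this
      exact hprim.pow_inj (Nat.mod_lt x hq) hr this
    rw [geom_sum_eq hw1, hwq]
    simp

set_option maxHeartbeats 2000000 in
theorem balanced_abstract {S : Finset ℕ} {m : ℕ} (hSpos : ∀ p ∈ S, 0 < p) (hmS : m ∈ S)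
    (hmax : ∀ p ∈ S, p ≤ m) {T : Finset ℕ} (hTS : T ⊆ S) (hTm : ∀ t ∈ T, t < m)
    (hTgcd : T.gcd id = 1) {q : ℕ} (hq : 2 ≤ q) {r : ℕ} (hr : r < q) :
    Filter.Tendsto (fun n : ℕ =>
      ((((comps S n).filter (fun l => l.count m % q = r)).card : ℝ)) / ((comps S n).card : ℝ))
      Filter.atTop (nhds (1 / q)) := by
  classical
  obtain ⟨N0, hN0⟩ := nrep_large hTgcd
  have hm0 : 0 < m := hSpos m hmS
  set ζ : ℂ := Complex.exp (2 * Real.pi * Complex.I / q) with hζ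
  have hprim : IsPrimitiveRoot ζ q := Complex.isPrimitiveRoot_exp q (by omega)
  have hζq : ζ ^ q = 1 := hprim.pow_eq_one
  have hζabs : ‖ζ‖ = 1 := by
    have h1 : (‖ζ‖) ^ q = 1 := by rw [← norm_pow, hζq, norm_one]
    have h0 : 0 ≤ ‖ζ‖ := norm_nonneg _
    rcases lt_trichotomy (‖ζ‖) 1 with h | h | h
    · exfalso
      have := pow_lt_one₀ h0 h (by omega : q ≠ 0)
      rw [h1] at this; exact lt_irrefl 1 this
    · exact h
    · exfalso
      have := one_lt_pow₀ h (by omega : q ≠ 0)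
      rw [h1] at this; exact lt_irrefl 1 this
  -- choose contraction constants
  have hch : ∀ d : ℕ, ∃ θ : ℝ, 0 ≤ θ ∧ θ < 1 ∧ (1 ≤ d → d < q →
      ∀ t n : ℕ, (N0 + 2 * m + m) * t ≤ n →
        ‖cplx S m (ζ ^ d) n‖ ≤ θ ^ t * ((comps S n).card : ℝ)) := by
    intro d
    by_cases hd : 1 ≤ d ∧ d < q
    · obtain ⟨θ, h0, h1, hB⟩ := theta_exists hSpos hmS hmax hTS hTm hN0 (ζ ^ d)
        (by rw [norm_pow, hζabs, one_pow])
        (hprim.pow_ne_one_of_pos_of_lt (by omega) hd.2)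
      exact ⟨θ, h0, h1, fun _ _ => hB⟩
    · exact ⟨1/2, by norm_num, by norm_num, fun h1 h2 => absurd ⟨h1, h2⟩ hd⟩
  choose θf hθf0 hθf1 hθfB using hch
  -- positivity of denominators
  have hapos : ∀ n, N0 ≤ n → 0 < (comps S n).card := by
    intro n hn
    obtain ⟨l, hlT, hls⟩ := hN0 n hn
    exact Finset.card_pos.mpr ⟨l, (mem_comps hSpos).mpr ⟨hls, fun p hp => hTS (hlT p hp)⟩⟩
  -- the character identity
  have hident : ∀ n : ℕ,
      (q : ℂ) * (((comps S n).filter (fun l => l.count m % q = r)).card : ℂ) =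
        ∑ d ∈ Finset.range q, (((ζ ^ r) ^ d)⁻¹) * cplx S m (ζ ^ d) n := by
    intro n
    have hswap : ∑ d ∈ Finset.range q, (((ζ ^ r) ^ d)⁻¹) * cplx S m (ζ ^ d) n
        = ∑ l ∈ comps S n, ∑ d ∈ Finset.range q,
            ((ζ ^ l.count m) * ((ζ ^ r)⁻¹)) ^ d := by
      calc ∑ d ∈ Finset.range q, (((ζ ^ r) ^ d)⁻¹) * cplx S m (ζ ^ d) n
          = ∑ d ∈ Finset.range q, ∑ l ∈ comps S n,
              ((ζ ^ l.count m) * ((ζ ^ r)⁻¹)) ^ d := by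
            apply Finset.sum_congr rfl
            intro d _
            rw [cplx, Finset.mul_sum]
            apply Finset.sum_congr rfl
            intro l _
            rw [mul_pow, ← inv_pow, pow_right_comm]
            ring
        _ = ∑ l ∈ comps S n, ∑ d ∈ Finset.range q,
              ((ζ ^ l.count m) * ((ζ ^ r)⁻¹)) ^ d := Finset.sum_comm
    rw [hswap]
    have : ∀ l ∈ comps S n, ∑ d ∈ Finset.range q,
        ((ζ ^ l.count m) * ((ζ ^ r)⁻¹)) ^ d
        = if l.count m % q = r then (q : ℂ) else 0 :=
      fun l _ => char_sum (by omega) hr hprim (l.count m)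
    rw [Finset.sum_congr rfl this, ← Finset.sum_filter, Finset.sum_const, nsmul_eq_mul,
      mul_comm]
  -- main estimate
  have hkey : ∀ t n : ℕ, (N0 + 2 * m + m) * t ≤ n → N0 ≤ n →
      |(q : ℝ) * (((comps S n).filter (fun l => l.count m % q = r)).card : ℝ)
        - ((comps S n).card : ℝ)|
      ≤ (∑ d ∈ Finset.Ico 1 q, θf d ^ t) * ((comps S n).card : ℝ) := by
    intro t n htn hn
    set bn := (((comps S n).filter (fun l => l.count m % q = r)).card : ℝ) with hbn
    set an := ((comps S n).card : ℝ) with han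
    have hsplit : (q : ℂ) * (bn : ℂ) - (an : ℂ)
        = ∑ d ∈ Finset.Ico 1 q, (((ζ ^ r) ^ d)⁻¹) * cplx S m (ζ ^ d) n := by
      have h0 : (((ζ ^ r) ^ 0)⁻¹) * cplx S m (ζ ^ 0) n = (an : ℂ) := by
        rw [pow_zero, pow_zero, inv_one, one_mul, cplx]
        simp [han]
      have hr2 : ∑ d ∈ Finset.range q, (((ζ ^ r) ^ d)⁻¹) * cplx S m (ζ ^ d) n
          = (an : ℂ) + ∑ d ∈ Finset.Ico 1 q, (((ζ ^ r) ^ d)⁻¹) * cplx S m (ζ ^ d) n := by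
        rw [Finset.range_eq_Ico, Finset.sum_eq_sum_Ico_succ_bot (by omega : 0 < q), h0]
      have := hident n
      rw [hr2] at this
      push_cast [hbn, han] at this ⊢
      linear_combination this
    have habs : ‖(q : ℂ) * (bn : ℂ) - (an : ℂ)‖
        ≤ (∑ d ∈ Finset.Ico 1 q, θf d ^ t) * an := by
      rw [hsplit]
      calc ‖∑ d ∈ Finset.Ico 1 q, (((ζ ^ r) ^ d)⁻¹) * cplx S m (ζ ^ d) n‖
          ≤ ∑ d ∈ Finset.Ico 1 q,
              ‖(((ζ ^ r) ^ d)⁻¹) * cplx S m (ζ ^ d) n‖ := norm_sum_le _ _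
        _ ≤ ∑ d ∈ Finset.Ico 1 q, θf d ^ t * an := by
            apply Finset.sum_le_sum
            intro d hd
            rw [Finset.mem_Ico] at hd
            rw [norm_mul]
            have hc1 : ‖((ζ ^ r) ^ d)⁻¹‖ = 1 := by
              rw [norm_inv, norm_pow, norm_pow, hζabs, one_pow, one_pow, inv_one]
            rw [hc1, one_mul]
            exact hθfB d hd.1 hd.2 t n htn
        _ = (∑ d ∈ Finset.Ico 1 q, θf d ^ t) * an := by rw [Finset.sum_mul]
    have hcast : ‖(q : ℂ) * (bn : ℂ) - (an : ℂ)‖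
        = |(q : ℝ) * bn - an| := by
      have : ((q : ℝ) * bn - an : ℝ) = ((q : ℂ) * (bn : ℂ) - (an : ℂ)).re ∧
          (((q : ℂ) * (bn : ℂ) - (an : ℂ)).im = 0) := by
        constructor <;> simp
      rw [show (q : ℂ) * (bn : ℂ) - (an : ℂ) = (((q : ℝ) * bn - an : ℝ) : ℂ) by push_cast; ring]
      rw [Complex.norm_real, Real.norm_eq_abs]
    rw [← hcast]
    exact habs
  -- final limit argument
  rw [Metric.tendsto_atTop]
  intro ε hε
  have hsum0 : Filter.Tendsto (fun t : ℕ => ∑ d ∈ Finset.Ico 1 q, θf d ^ t)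
      Filter.atTop (nhds 0) := by
    have : Filter.Tendsto (fun t : ℕ => ∑ d ∈ Finset.Ico 1 q, θf d ^ t)
        Filter.atTop (nhds (∑ d ∈ Finset.Ico 1 q, (0:ℝ))) := by
      apply tendsto_finset_sum
      intro d _
      exact tendsto_pow_atTop_nhds_zero_of_lt_one (hθf0 d) (hθf1 d)
    simpa using this
  obtain ⟨t, ht⟩ : ∃ t : ℕ, ∑ d ∈ Finset.Ico 1 q, θf d ^ t < ε := by
    have := (hsum0.eventually (gt_mem_nhds hε)).exists
    exact this
  refine ⟨max ((N0 + 2 * m + m) * t) N0, fun n hn => ?_⟩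
  have htn : (N0 + 2 * m + m) * t ≤ n := le_trans (le_max_left _ _) hn
  have hnN0 : N0 ≤ n := le_trans (le_max_right _ _) hn
  set bn := (((comps S n).filter (fun l => l.count m % q = r)).card : ℝ) with hbn
  set an := ((comps S n).card : ℝ) with han
  have hanpos : 0 < an := by
    rw [han]; exact_mod_cast hapos n hnN0
  have hqpos : (0:ℝ) < q := by positivity
  have hform : bn / an - 1 / q = ((q : ℝ) * bn - an) / (q * an) := by
    field_simp
  rw [Real.dist_eq, hform, abs_div]
  have hdenom : |(q : ℝ) * an| = q * an := abs_of_pos (by positivity)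
  rw [hdenom]
  have hnum := hkey t n htn hnN0
  rw [← hbn, ← han] at hnum
  have hsumnn : 0 ≤ ∑ d ∈ Finset.Ico 1 q, θf d ^ t :=
    Finset.sum_nonneg fun d _ => pow_nonneg (hθf0 d) t
  calc |(q : ℝ) * bn - an| / (q * an)
      ≤ ((∑ d ∈ Finset.Ico 1 q, θf d ^ t) * an) / (q * an) := by
        apply div_le_div_of_nonneg_right hnum (by positivity) |>.trans_eq rfl
    _ = (∑ d ∈ Finset.Ico 1 q, θf d ^ t) / q := by
        field_simp
    _ ≤ ∑ d ∈ Finset.Ico 1 q, θf d ^ t := by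
        apply div_le_self hsumnn
        exact_mod_cast (by omega : 1 ≤ q)
    _ < ε := ht

open Filter in
theorem multiplicity_balanced (k : ℕ) (hk : 2 ≤ k) (s : Fin k → ℕ)
    (hmono : StrictMono s) (hpos : ∀ i, 0 < s i)
    (hgcd : (Finset.univ.filter (fun i : Fin k => (i : ℕ) < k - 1)).gcd s = 1)
    (S : Finset ℕ) (hS : S = Finset.image s Finset.univ)
    (m : ℕ) (hm : m = s ⟨k - 1, by omega⟩)
    (q : ℕ) (hq : 2 ≤ q) (r : ℕ) (hr : r < q) :
    Tendsto (fun n : ℕ =>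
        (Nat.card {l : List ℕ // l.sum = n ∧ (∀ p ∈ l, p ∈ S) ∧ l.count m % q = r} : ℝ) /
          (Nat.card {l : List ℕ // l.sum = n ∧ ∀ p ∈ l, p ∈ S} : ℝ))
      atTop (nhds (1 / q)) := by
  classical
  have hSpos : ∀ p ∈ S, 0 < p := by
    intro p hp
    rw [hS, Finset.mem_image] at hp
    obtain ⟨i, _, rfl⟩ := hp
    exact hpos i
  have hmS : m ∈ S := by
    rw [hS, hm]
    exact Finset.mem_image_of_mem _ (Finset.mem_univ _)
  have hmax : ∀ p ∈ S, p ≤ m := by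
    intro p hp
    rw [hS, Finset.mem_image] at hp
    obtain ⟨i, _, rfl⟩ := hp
    rw [hm]
    apply hmono.monotone
    rw [Fin.le_def]
    simp only []
    omega
  set T := (Finset.univ.filter (fun i : Fin k => (i : ℕ) < k - 1)).image s with hT
  have hTS : T ⊆ S := by
    intro t ht
    rw [hT, Finset.mem_image] at ht
    obtain ⟨i, _, rfl⟩ := ht
    rw [hS]
    exact Finset.mem_image_of_mem _ (Finset.mem_univ _)
  have hTm : ∀ t ∈ T, t < m := by
    intro t ht
    rw [hT, Finset.mem_image] at ht
    obtain ⟨i, hi, rfl⟩ := ht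
    rw [Finset.mem_filter] at hi
    rw [hm]
    apply hmono
    rw [Fin.lt_def]
    simp only []
    omega
  have hTgcd : T.gcd id = 1 := by
    rw [hT, Finset.gcd_image]
    exact hgcd
  have habs := balanced_abstract hSpos hmS hmax hTS hTm hTgcd hq hr
  have heq : (fun n : ℕ =>
      (Nat.card {l : List ℕ // l.sum = n ∧ (∀ p ∈ l, p ∈ S) ∧ l.count m % q = r} : ℝ) /
        (Nat.card {l : List ℕ // l.sum = n ∧ ∀ p ∈ l, p ∈ S} : ℝ)) = fun n : ℕ =>
      ((((comps S n).filter (fun l => l.count m % q = r)).card : ℝ)) /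
        ((comps S n).card : ℝ) := by
    funext n
    have h1 : Nat.card {l : List ℕ // l.sum = n ∧ ∀ p ∈ l, p ∈ S} = (comps S n).card := by
      rw [← Nat.card_eq_finsetCard]
      apply Nat.card_congr
      apply Equiv.subtypeEquivRight
      intro l
      rw [mem_comps hSpos]
    have h2 : Nat.card {l : List ℕ // l.sum = n ∧ (∀ p ∈ l, p ∈ S) ∧ l.count m % q = r}
        = ((comps S n).filter (fun l => l.count m % q = r)).card := by
      rw [← Nat.card_eq_finsetCard]
      apply Nat.card_congr
      apply Equiv.subtypeEquivRight
      intro l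
      rw [Finset.mem_filter, mem_comps hSpos]
      tauto
    rw [h1, h2]
  rw [heq]
  exact habs
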